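/- arXiv:1306.4838 — 3 statements merged into one kernel-verified Lean document; each statement's English description precedes it below -/
import Mathlib

section
/- The image of the centralizer M_n^{X_λ} = {Y ∈ M_n(K) : YX_λ = X_λY} under the map pr_ext sending Y to the extracted d×d matrix Y_ext = (Y^{i,i'}_{1,1})_{1 ≤ i,i' ≤ d} is exactly the parabolic subalgebra {Z ∈ M_d(K) : Z_{i,i'} = 0 whenever λ_i < λ_{i'}}, i.e. the set of Z ∈ M_d(K) stabilizing each subspace W_ℓ = span{ε_i : λ_i ≥ ℓ} (ε_1,…,ε_d the standard basis of K^d, ℓ ≥ 1). -/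
/-- The nilpotent Jordan matrix `X_λ` attached to a partition
`λ = (λ_1 ≥ … ≥ λ_d)`, in the basis `f^i_j` encoded by the sigma type
`Σ i : Fin d, Fin (λ i)` (0-based): `X_λ f^i_j = f^i_{j-1}` for `j > 1` and
`X_λ f^i_1 = 0`. -/
def jordanMatrix (K : Type) [Field K] {d : ℕ} (lam : Fin d → ℕ) :
    Matrix (Σ i : Fin d, Fin (lam i)) (Σ i : Fin d, Fin (lam i)) K :=
  Matrix.of fun s t => if s.1 = t.1 ∧ (s.2 : ℕ) + 1 = (t.2 : ℕ) then 1 else 0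

/-- The extracted `d × d` matrix `Y_ext = (Y^{i,i'}_{1,1})_{i,i'}`. -/
def prExt {K : Type} [Field K] {d : ℕ} (lam : Fin d → ℕ) (hpos : ∀ i, 1 ≤ lam i)
    (Y : Matrix (Σ i : Fin d, Fin (lam i)) (Σ i : Fin d, Fin (lam i)) K) :
    Matrix (Fin d) (Fin d) K :=
  Matrix.of fun i i' => Y ⟨i, ⟨0, hpos i⟩⟩ ⟨i', ⟨0, hpos i'⟩⟩

lemma mulX {K : Type} [Field K] {d : ℕ} {lam : Fin d → ℕ}
    (Y : Matrix (Σ i : Fin d, Fin (lam i)) (Σ i : Fin d, Fin (lam i)) K)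
    (s t : Σ i : Fin d, Fin (lam i)) :
    (Y * jordanMatrix K lam) s t =
      if h : 0 < (t.2 : ℕ) then Y s ⟨t.1, ⟨(t.2 : ℕ) - 1, by omega⟩⟩ else 0 := by
  rw [Matrix.mul_apply]
  split_ifs with h
  · rw [Finset.sum_eq_single (⟨t.1, ⟨(t.2 : ℕ) - 1, by omega⟩⟩ : Σ i : Fin d, Fin (lam i))]
    · simp [jordanMatrix]
      omega
    · rintro ⟨ui, uj⟩ _ hu
      simp only [jordanMatrix, Matrix.of_apply]
      rw [if_neg]
      · ring
      · rintro ⟨h1, h2⟩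
        apply hu
        subst h1
        simp only [Sigma.mk.inj_iff, heq_eq_eq, Fin.ext_iff, true_and]
        omega
    · intro hmem; exact absurd (Finset.mem_univ _) hmem
  · apply Finset.sum_eq_zero
    intro u _
    simp only [jordanMatrix, Matrix.of_apply]
    rw [if_neg]
    · ring
    · rintro ⟨h1, h2⟩; omega

lemma Xmul {K : Type} [Field K] {d : ℕ} {lam : Fin d → ℕ}
    (Y : Matrix (Σ i : Fin d, Fin (lam i)) (Σ i : Fin d, Fin (lam i)) K)
    (s t : Σ i : Fin d, Fin (lam i)) :
    (jordanMatrix K lam * Y) s t =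
      if h : (s.2 : ℕ) + 1 < lam s.1 then Y ⟨s.1, ⟨(s.2 : ℕ) + 1, h⟩⟩ t else 0 := by
  rw [Matrix.mul_apply]
  split_ifs with h
  · rw [Finset.sum_eq_single (⟨s.1, ⟨(s.2 : ℕ) + 1, h⟩⟩ : Σ i : Fin d, Fin (lam i))]
    · simp [jordanMatrix]
    · rintro ⟨ui, uj⟩ _ hu
      simp only [jordanMatrix, Matrix.of_apply]
      rw [if_neg]
      · ring
      · rintro ⟨h1, h2⟩
        apply hu
        subst h1
        simp only [Sigma.mk.inj_iff, heq_eq_eq, Fin.ext_iff, true_and]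
        omega
    · intro hmem; exact absurd (Finset.mem_univ _) hmem
  · apply Finset.sum_eq_zero
    rintro ⟨ui, uj⟩ _
    simp only [jordanMatrix, Matrix.of_apply]
    rw [if_neg]
    · ring
    · rintro ⟨h1, h2⟩
      subst h1
      have := uj.2
      omega

/-- the image of the centralizer of `X_λ` under `pr_ext` is
exactly the parabolic subalgebra `{Z ∈ M_d(K) : Z_{i,i'} = 0 whenever
λ_i < λ_{i'}}` (the matrices stabilizing each `W_ℓ = span{ε_i : λ_i ≥ ℓ}`). -/
theorem prExt_image_centralizer
    {K : Type} [Field K] [IsAlgClosed K] (n d : ℕ) (lam : Fin d → ℕ)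
    (hpos : ∀ i, 1 ≤ lam i) (hanti : Antitone lam) (hsum : ∑ i, lam i = n) :
    {Z : Matrix (Fin d) (Fin d) K |
        ∃ Y : Matrix (Σ i : Fin d, Fin (lam i)) (Σ i : Fin d, Fin (lam i)) K,
          Y * jordanMatrix K lam = jordanMatrix K lam * Y ∧ Z = prExt lam hpos Y} =
      {Z : Matrix (Fin d) (Fin d) K | ∀ i i' : Fin d, lam i < lam i' → Z i i' = 0} := by
  ext Z
  simp only [Set.mem_setOf_eq]
  constructor
  · rintro ⟨Y, hY, rfl⟩
    intro i i' hlt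
    have hc : ∀ s t, (Y * jordanMatrix K lam) s t = (jordanMatrix K lam * Y) s t := by
      intro s t; rw [hY]
    -- downward induction
    have key : ∀ m : ℕ, ∀ j : ℕ, ∀ hj : j < lam i, lam i - 1 - j = m →
        Y ⟨i, ⟨j, hj⟩⟩ ⟨i', ⟨j, by omega⟩⟩ = 0 := by
      intro m
      induction m with
      | zero =>
        intro j hj hm
        have hj1 : j + 1 < lam i' := by omega
        have := hc ⟨i, ⟨j, hj⟩⟩ ⟨i', ⟨j + 1, hj1⟩⟩
        rw [mulX, Xmul] at this
        rw [dif_pos (by simp)] at this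
        rw [dif_neg (by simp; omega)] at this
        simpa using this
      | succ m ih =>
        intro j hj hm
        have hj1 : j + 1 < lam i' := by omega
        have := hc ⟨i, ⟨j, hj⟩⟩ ⟨i', ⟨j + 1, hj1⟩⟩
        rw [mulX, Xmul] at this
        rw [dif_pos (by simp)] at this
        rw [dif_pos (by simp; omega)] at this
        have h2 : (j : ℕ) + 1 < lam i := by omega
        calc Y ⟨i, ⟨j, hj⟩⟩ ⟨i', ⟨j, by omega⟩⟩
            = Y ⟨i, ⟨j + 1, h2⟩⟩ ⟨i', ⟨j + 1, hj1⟩⟩ := by convert this using 4; simp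
          _ = 0 := ih (j + 1) h2 (by omega)
    have := key (lam i - 1) 0 (hpos i) (by omega)
    simpa [prExt] using this
  · intro hZ
    refine ⟨Matrix.of fun s t => if (s.2 : ℕ) = (t.2 : ℕ) then Z s.1 t.1 else 0, ?_, ?_⟩
    · ext s t
      rw [mulX, Xmul]
      obtain ⟨i, j⟩ := s
      obtain ⟨i', j'⟩ := t
      simp only [Matrix.of_apply]
      split_ifs with h1 h2 h2 h3 h4 <;> simp_all <;> try omega
      · apply hZ
        have := j'.2
        omega
    · ext i i'
      simp [prExt]
end

section
/- Let Y ∈ M_n(K) commute with the Jordan matrix X_λ. Then Y is nilpotent if and only if, for every ℓ ≥ 1 occurring as a part of λ, the extracted τ_ℓ×τ_ℓ matrix Y(ℓ) is nilpotent. -/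
open Polynomial Matrix Finset


/-- For `ℓ ≥ 1`, the extracted `τ_ℓ × τ_ℓ` matrix `Y(ℓ) = (Y^{i,i'}_{1,1})`
indexed by the pairs `(i,i')` with `λ_i = λ_{i'} = ℓ`. -/
def prBlock {K : Type} [Field K] {d : ℕ} (lam : Fin d → ℕ) (hpos : ∀ i, 1 ≤ lam i)
    (Y : Matrix (Σ i : Fin d, Fin (lam i)) (Σ i : Fin d, Fin (lam i)) K) (ℓ : ℕ) :
    Matrix {i : Fin d // lam i = ℓ} {i : Fin d // lam i = ℓ} K :=
  Matrix.of fun a b => Y ⟨a.1, ⟨0, hpos a.1⟩⟩ ⟨b.1, ⟨0, hpos b.1⟩⟩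

section aux

variable {K : Type} [Field K] {d : ℕ} {lam : Fin d → ℕ}
variable (Y : Matrix (Σ i : Fin d, Fin (lam i)) (Σ i : Fin d, Fin (lam i)) K)
variable (hY : Y * jordanMatrix K lam = jordanMatrix K lam * Y)

lemma sigma_mk_eq (i : Fin d) {a b : ℕ} (hab : a = b) (p : a < lam i) (q : b < lam i) :
    (⟨i, ⟨a, p⟩⟩ : Σ i : Fin d, Fin (lam i)) = ⟨i, ⟨b, q⟩⟩ := by subst hab; rfl

include hY in
/-- Fundamental commutation relation entrywise. -/
lemma jordan_rel (s t : Σ i : Fin d, Fin (lam i)) :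
    (if _ : 0 < (t.2 : ℕ) then
        Y s ⟨t.1, ⟨(t.2 : ℕ) - 1, lt_of_le_of_lt (Nat.pred_le _) t.2.isLt⟩⟩ else 0)
      = (if h : (s.2 : ℕ) + 1 < lam s.1 then Y ⟨s.1, ⟨(s.2 : ℕ) + 1, h⟩⟩ t else 0) := by
  have H := congrFun (congrFun hY s) t
  rw [Matrix.mul_apply, Matrix.mul_apply] at H
  have hL : ∑ u, Y s u * jordanMatrix K lam u t
      = (if _ : 0 < (t.2 : ℕ) then
          Y s ⟨t.1, ⟨(t.2 : ℕ) - 1, lt_of_le_of_lt (Nat.pred_le _) t.2.isLt⟩⟩ else 0) := by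
    split_ifs with h
    · rw [Finset.sum_eq_single
        (⟨t.1, ⟨(t.2 : ℕ) - 1, lt_of_le_of_lt (Nat.pred_le _) t.2.isLt⟩⟩ :
          Σ i : Fin d, Fin (lam i))]
      · have h2 : ((t.2 : ℕ) - 1) + 1 = (t.2 : ℕ) := by omega
        simp [jordanMatrix, h2]
      · rintro ⟨u1, u2⟩ _ hu
        simp only [jordanMatrix, Matrix.of_apply]
        rw [if_neg, mul_zero]
        rintro ⟨h1, h2⟩
        apply hu

        subst h1
        refine Sigma.ext rfl (heq_of_eq (Fin.ext ?_))
        show (u2 : ℕ) = (t.2 : ℕ) - 1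
        omega
      · intro hmem; exact absurd (Finset.mem_univ _) hmem
    · apply Finset.sum_eq_zero
      rintro ⟨u1, u2⟩ _
      simp only [jordanMatrix, Matrix.of_apply]
      rw [if_neg, mul_zero]
      rintro ⟨_, h2⟩

      omega
  have hR : ∑ u, jordanMatrix K lam s u * Y u t
      = (if h : (s.2 : ℕ) + 1 < lam s.1 then Y ⟨s.1, ⟨(s.2 : ℕ) + 1, h⟩⟩ t else 0) := by
    split_ifs with h
    · rw [Finset.sum_eq_single (⟨s.1, ⟨(s.2 : ℕ) + 1, h⟩⟩ : Σ i : Fin d, Fin (lam i))]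
      · simp [jordanMatrix]
      · rintro ⟨u1, u2⟩ _ hu
        simp only [jordanMatrix, Matrix.of_apply]
        rw [if_neg, zero_mul]
        rintro ⟨h1, h2⟩
        apply hu

        have h1' : u1 = s.1 := h1.symm
        subst h1'
        refine Sigma.ext rfl (heq_of_eq (Fin.ext ?_))
        show (u2 : ℕ) = (s.2 : ℕ) + 1
        omega
      · intro hmem; exact absurd (Finset.mem_univ _) hmem
    · apply Finset.sum_eq_zero
      rintro ⟨u1, u2⟩ _
      simp only [jordanMatrix, Matrix.of_apply]
      rw [if_neg, zero_mul]
      rintro ⟨h1, h2⟩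
      apply h

      have h1' : u1 = s.1 := h1.symm
      subst h1'
      omega
  rw [← hL, ← hR, H]

include hY in
lemma jordan_zero1 : ∀ (m : ℕ) (s t : Σ i : Fin d, Fin (lam i)),
    (t.2 : ℕ) = m → (t.2 : ℕ) < (s.2 : ℕ) → Y s t = 0 := by
  intro m
  induction m with
  | zero =>
    intro s t ht hlt
    have hs2 := s.2.isLt
    have h1 : ((s.2 : ℕ) - 1) + 1 < lam s.1 := by omega
    have H := jordan_rel Y hY ⟨s.1, ⟨(s.2 : ℕ) - 1, by omega⟩⟩ t
    dsimp only at H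
    have hneg : ¬ 0 < (t.2 : ℕ) := by omega
    rw [dif_neg hneg, dif_pos h1, sigma_mk_eq s.1 (by omega : (s.2:ℕ) - 1 + 1 = (s.2:ℕ)) h1
      s.2.isLt] at H
    rw [Fin.eta, Sigma.eta] at H
    exact H.symm
  | succ m ih =>
    intro s t ht hlt
    have hs2 := s.2.isLt
    have h1 : ((s.2 : ℕ) - 1) + 1 < lam s.1 := by omega
    have H := jordan_rel Y hY ⟨s.1, ⟨(s.2 : ℕ) - 1, by omega⟩⟩ t
    dsimp only at H
    have hposb : 0 < (t.2 : ℕ) := by omega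
    rw [dif_pos hposb, dif_pos h1, sigma_mk_eq s.1 (by omega : (s.2:ℕ) - 1 + 1 = (s.2:ℕ)) h1
      s.2.isLt] at H
    rw [Fin.eta, Sigma.eta] at H
    rw [← H]
    exact ih _ _ (by dsimp only; omega) (by dsimp only; omega)

include hY in
lemma jordan_zero2 : ∀ (m : ℕ) (s t : Σ i : Fin d, Fin (lam i)),
    lam s.1 - 1 - (s.2 : ℕ) = m → lam s.1 - (s.2 : ℕ) < lam t.1 - (t.2 : ℕ) → Y s t = 0 := by
  intro m
  induction m with
  | zero =>
    intro s t hm hlt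
    have hs2 := s.2.isLt
    have ht2l := t.2.isLt
    have ht2 : (t.2 : ℕ) + 1 < lam t.1 := by omega
    have H := jordan_rel Y hY s ⟨t.1, ⟨(t.2 : ℕ) + 1, ht2⟩⟩
    dsimp only at H
    have hposb : 0 < (t.2 : ℕ) + 1 := by omega
    have hneg : ¬ ((s.2 : ℕ) + 1 < lam s.1) := by omega
    rw [dif_pos hposb, dif_neg hneg,
      sigma_mk_eq t.1 (by omega : (t.2:ℕ) + 1 - 1 = (t.2:ℕ)) _ t.2.isLt] at H
    rw [Fin.eta, Sigma.eta] at H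
    exact H
  | succ m ih =>
    intro s t hm hlt
    have hs2l := s.2.isLt
    have ht2l := t.2.isLt
    have hs2 : (s.2 : ℕ) + 1 < lam s.1 := by omega
    have ht2 : (t.2 : ℕ) + 1 < lam t.1 := by omega
    have H := jordan_rel Y hY s ⟨t.1, ⟨(t.2 : ℕ) + 1, ht2⟩⟩
    dsimp only at H
    have hposb : 0 < (t.2 : ℕ) + 1 := by omega
    rw [dif_pos hposb, dif_pos hs2,
      sigma_mk_eq t.1 (by omega : (t.2:ℕ) + 1 - 1 = (t.2:ℕ)) _ t.2.isLt] at H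
    rw [Fin.eta, Sigma.eta] at H
    rw [H]
    exact ih _ _ (by dsimp only; omega) (by dsimp only; omega)

include hY in
lemma jordan_diag (i i' : Fin d) (h : lam i = lam i') :
    ∀ (j : ℕ) (hj : j < lam i),
      Y ⟨i, ⟨j, hj⟩⟩ ⟨i', ⟨j, by omega⟩⟩ = Y ⟨i, ⟨0, by omega⟩⟩ ⟨i', ⟨0, by omega⟩⟩ := by
  intro j
  induction j with
  | zero => intro hj; rfl
  | succ j ih =>
    intro hj
    have hj' : j < lam i := by omega
    have hj'' : (j : ℕ) + 1 < lam i' := by omega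
    have H := jordan_rel Y hY (⟨i, ⟨j, hj'⟩⟩ : Σ i : Fin d, Fin (lam i))
      (⟨i', ⟨j + 1, hj''⟩⟩ : Σ i : Fin d, Fin (lam i))
    dsimp only at H
    have hposb : 0 < j + 1 := Nat.succ_pos j
    rw [dif_pos hposb, dif_pos (by omega : j + 1 < lam i),
      sigma_mk_eq i' (by omega : j + 1 - 1 = j) _ (by omega)] at H
    rw [← H]
    exact ih hj'

include hY in
lemma jordan_diag' (s t : Σ i : Fin d, Fin (lam i)) (h : lam s.1 = lam t.1)
    (h2 : (s.2 : ℕ) = (t.2 : ℕ)) (p : 0 < lam s.1) (q : 0 < lam t.1) :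
    Y s t = Y ⟨s.1, ⟨0, p⟩⟩ ⟨t.1, ⟨0, q⟩⟩ := by
  have hD := jordan_diag Y hY s.1 t.1 h (s.2 : ℕ) s.2.isLt
  rw [sigma_mk_eq t.1 h2 _ t.2.isLt, Fin.eta, Sigma.eta, Fin.eta, Sigma.eta] at hD
  exact hD

lemma isNilpotent_iff_charpoly {ι : Type*} [Fintype ι] [DecidableEq ι]
    (M : Matrix ι ι K) : IsNilpotent M ↔ M.charpoly = X ^ Fintype.card ι := by
  constructor
  · intro hM
    have h := Matrix.isNilpotent_charpoly_sub_pow_of_isNilpotent hM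
    have h0 := h.eq_zero
    rwa [sub_eq_zero] at h0
  · intro h
    refine ⟨Fintype.card ι, ?_⟩
    have h2 := M.aeval_self_charpoly
    rw [h] at h2
    simpa using h2

end aux

/-- Let `Y` commute with the Jordan matrix `X_λ`.  Then `Y` is
nilpotent iff, for every `ℓ ≥ 1` occurring as a part of `λ`, the extracted
matrix `Y(ℓ)` is nilpotent. -/
theorem nilpotent_iff_blocks_nilpotent_of_commutes_with_jordan
    {K : Type} [Field K] [IsAlgClosed K] (n d : ℕ) (lam : Fin d → ℕ)
    (hpos : ∀ i, 1 ≤ lam i) (hanti : Antitone lam) (hsum : ∑ i, lam i = n)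
    (Y : Matrix (Σ i : Fin d, Fin (lam i)) (Σ i : Fin d, Fin (lam i)) K)
    (hY : Y * jordanMatrix K lam = jordanMatrix K lam * Y) :
    IsNilpotent Y ↔
      ∀ ℓ : ℕ, 1 ≤ ℓ → (∃ i : Fin d, lam i = ℓ) →
        IsNilpotent (prBlock lam hpos Y ℓ) := by
  classical
  set b : (Σ i : Fin d, Fin (lam i)) → ℕ ×ₗ ℕ :=
    fun s => toLex ((s.2 : ℕ), n - (lam s.1 - (s.2 : ℕ))) with hbdef
  have hlam_le : ∀ i, lam i ≤ n := by
    intro i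
    rw [← hsum]
    exact Finset.single_le_sum (fun j _ => Nat.zero_le _) (Finset.mem_univ i)
  -- block triangularity
  have hBT : Y.BlockTriangular b := by
    intro s t hlt
    rcases Prod.Lex.lt_iff.mp hlt with h | ⟨h1, h2⟩
    · exact jordan_zero1 Y hY _ s t rfl h
    · simp only [hbdef, ofLex_toLex] at h1 h2
      refine jordan_zero2 Y hY _ s t rfl ?_
      have := hlam_le s.1; have := hlam_le t.1
      have := s.2.isLt; have := t.2.isLt
      omega
  -- description of fibers of b
  have hfib : ∀ s₀ s : Σ i : Fin d, Fin (lam i),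
      b s = b s₀ ↔ ((s.2 : ℕ) = (s₀.2 : ℕ) ∧ lam s.1 = lam s₀.1) := by
    intro s₀ s
    constructor
    · intro h
      have h' : ((s.2 : ℕ), n - (lam s.1 - (s.2 : ℕ)))
          = ((s₀.2 : ℕ), n - (lam s₀.1 - (s₀.2 : ℕ))) := congrArg ofLex h
      have h1 := congrArg Prod.fst h'
      have h2 := congrArg Prod.snd h'
      simp only at h1 h2
      have := hlam_le s.1; have := hlam_le s₀.1
      have := s.2.isLt; have := s₀.2.isLt
      exact ⟨h1, by omega⟩
    · rintro ⟨h1, h2⟩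
      simp only [hbdef, h1, h2]
  -- the key fact about each diagonal block
  have key : ∀ s₀ : Σ i : Fin d, Fin (lam i),
      (Y.toSquareBlock b (b s₀)).charpoly = (prBlock lam hpos Y (lam s₀.1)).charpoly ∧
      (Finset.univ.filter fun s => b s = b s₀).card = Fintype.card {i : Fin d // lam i = lam s₀.1} := by
    intro s₀
    let e : {s : Σ i : Fin d, Fin (lam i) // b s = b s₀} ≃ {i : Fin d // lam i = lam s₀.1} :=
      { toFun := fun s => ⟨s.1.1, ((hfib s₀ s.1).mp s.2).2⟩
        invFun := fun i => ⟨⟨i.1, ⟨(s₀.2 : ℕ), by rw [i.2]; exact s₀.2.isLt⟩⟩,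
          (hfib s₀ _).mpr ⟨rfl, i.2⟩⟩
        left_inv := by
          rintro ⟨s, hs⟩
          obtain ⟨h1, h2⟩ := (hfib s₀ s).mp hs
          refine Subtype.ext ?_
          refine Sigma.ext rfl (heq_of_eq (Fin.ext ?_))
          exact h1.symm
        right_inv := fun i => rfl }
    have hblock : Y.toSquareBlock b (b s₀)
        = (prBlock lam hpos Y (lam s₀.1)).submatrix e e := by
      ext a c
      have ha := (hfib s₀ a.1).mp a.2
      have hc := (hfib s₀ c.1).mp c.2
      simp only [Matrix.toSquareBlock_def, Matrix.of_apply, Matrix.submatrix_apply, prBlock]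
      exact jordan_diag' Y hY a.1 c.1 (by rw [ha.2, hc.2]) (by rw [ha.1, hc.1])
        (hpos _) (hpos _)
    constructor
    · rw [hblock]
      have : (prBlock lam hpos Y (lam s₀.1)).submatrix e e
          = Matrix.reindex e.symm e.symm (prBlock lam hpos Y (lam s₀.1)) := by
        rw [Matrix.reindex_apply]
        simp
      rw [this, Matrix.charpoly_reindex]
    · rw [← Fintype.card_subtype]
      exact Fintype.card_congr e
  have hcp := hBT.charpoly
  constructor
  · -- forward
    intro hN ℓ hℓ hex
    obtain ⟨i₀, hi₀⟩ := hex
    set s₀ : Σ i : Fin d, Fin (lam i) := ⟨i₀, ⟨0, hpos i₀⟩⟩ with hs₀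
    have hv : b s₀ ∈ Finset.image b Finset.univ :=
      Finset.mem_image_of_mem b (Finset.mem_univ s₀)
    have hch : Y.charpoly = X ^ Fintype.card (Σ i : Fin d, Fin (lam i)) :=
      (isNilpotent_iff_charpoly Y).mp hN
    have hdvd : (Y.toSquareBlock b (b s₀)).charpoly
        ∣ X ^ Fintype.card (Σ i : Fin d, Fin (lam i)) := by
      rw [← hch, hcp]
      exact Finset.dvd_prod_of_mem _ hv
    rw [(key s₀).1] at hdvd
    have hls : lam s₀.1 = ℓ := hi₀
    rw [hls] at hdvd
    obtain ⟨q, hq⟩ := hdvd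
    refine ⟨Fintype.card (Σ i : Fin d, Fin (lam i)), ?_⟩
    have h1 := congrArg (Polynomial.aeval (prBlock lam hpos Y ℓ)) hq
    simpa [Matrix.aeval_self_charpoly] using h1
  · -- backward
    intro hblocks
    rw [isNilpotent_iff_charpoly, hcp]
    have hfac : ∀ v ∈ Finset.image b Finset.univ,
        (Y.toSquareBlock b v).charpoly
          = X ^ (Finset.univ.filter fun s => b s = v).card := by
      intro v hv
      obtain ⟨s₀, _, rfl⟩ := Finset.mem_image.mp hv
      have hnil : IsNilpotent (prBlock lam hpos Y (lam s₀.1)) :=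
        hblocks (lam s₀.1) (hpos s₀.1) ⟨s₀.1, rfl⟩
      rw [(key s₀).1, (isNilpotent_iff_charpoly _).mp hnil, (key s₀).2]
    rw [Finset.prod_congr rfl hfac, Finset.prod_pow_eq_pow_sum]
    congr 1
    rw [← Finset.card_eq_sum_card_fiberwise (fun x _ => Finset.mem_image_of_mem b (Finset.mem_univ x))]
    exact (Finset.card_univ).symm
end

section
/- Let X, Y ∈ M_n(K) with XY = YX, and let v_1, v_2 ∈ K^n both be cyclic vectors for the pair (X,Y). Then there exists g ∈ GL_n(K) with gXg⁻¹ = X, gYg⁻¹ = Y, gv_1 = v_2, and such that g stabilizes every linear subspace of K^n that is stable under both X and Y. In particular, if X, Y ∈ p_{k,n} (resp. X, Y ∈ q_{k,n}) then g ∈ P_{k,n} (resp. g ∈ Q_{k,n}), so (X,Y,v_1) and (X,Y,v_2) lie in the same P_{k,n}-orbit (resp. Q_{k,n}-orbit). -/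
/-- `v` is a cyclic vector for the commuting pair `(X, Y)`: the vectors
`X^a Y^b v` span `K^n`. -/
def IsCyclicVector {K : Type} [Field K] {n : ℕ}
    (X Y : Matrix (Fin n) (Fin n) K) (v : Fin n → K) : Prop :=
  Submodule.span K
    {w : Fin n → K | ∃ a b : ℕ, w = (X ^ a * Y ^ b).mulVec v} = ⊤

lemma my_sum_mulVec {K : Type} [Field K] {n : ℕ} {ι : Type} (s : Finset ι)
    (A : ι → Matrix (Fin n) (Fin n) K) (u : Fin n → K) :
    (∑ i ∈ s, A i).mulVec u = ∑ i ∈ s, (A i).mulVec u := by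
  classical
  induction s using Finset.induction with
  | empty => simp
  | insert x s h ih => simp [Finset.sum_insert h, Matrix.add_mulVec, ih]

/-- Let `X, Y ∈ M_n(K)` commute and let `v₁, v₂` both be cyclic
vectors for `(X, Y)`.  Then there is `g ∈ GL_n(K)` with `gXg⁻¹ = X`,
`gYg⁻¹ = Y`, `g v₁ = v₂`, stabilizing every linear subspace of `K^n` stable
under both `X` and `Y`.  (In particular if `X, Y ∈ p_{k,n}`, resp. `q_{k,n}`,
then `g ∈ P_{k,n}`, resp. `Q_{k,n}`, so the two triples lie in the same
orbit.) -/
theorem cyclic_triples_same_orbit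
    {K : Type} [Field K] [IsAlgClosed K] {n : ℕ}
    (X Y : Matrix (Fin n) (Fin n) K) (hcomm : X * Y = Y * X)
    (v₁ v₂ : Fin n → K)
    (hv₁ : IsCyclicVector X Y v₁) (hv₂ : IsCyclicVector X Y v₂) :
    ∃ g : Matrix.GeneralLinearGroup (Fin n) K,
      (g : Matrix (Fin n) (Fin n) K) * X *
          ((g⁻¹ : Matrix.GeneralLinearGroup (Fin n) K) : Matrix (Fin n) (Fin n) K) = X ∧
      (g : Matrix (Fin n) (Fin n) K) * Y *
          ((g⁻¹ : Matrix.GeneralLinearGroup (Fin n) K) : Matrix (Fin n) (Fin n) K) = Y ∧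
      (g : Matrix (Fin n) (Fin n) K).mulVec v₁ = v₂ ∧
      ∀ W : Submodule K (Fin n → K),
        (∀ w ∈ W, X.mulVec w ∈ W) → (∀ w ∈ W, Y.mulVec w ∈ W) →
        ∀ w ∈ W, (g : Matrix (Fin n) (Fin n) K).mulVec w ∈ W := by
  classical
  -- express v₂ as a combination of X^a Y^b v₁
  have hv₂mem : v₂ ∈ Submodule.span K
      {w : Fin n → K | ∃ a b : ℕ, w = (X ^ a * Y ^ b).mulVec v₁} := by
    rw [hv₁]; trivial
  obtain ⟨m, c, w, hsum⟩ := Submodule.mem_span_set'.mp hv₂mem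
  choose a b hab using fun i => (w i).2
  set M : Matrix (Fin n) (Fin n) K := ∑ i, c i • (X ^ a i * Y ^ b i) with hM
  -- M commutes with X and Y
  have hcXY : Commute X Y := hcomm
  have hMX : Commute M X := by
    apply Commute.sum_left
    intro i _
    exact (((Commute.refl X).pow_left (a i)).mul_left ((hcXY.symm).pow_left (b i))).smul_left (c i)
  have hMY : Commute M Y := by
    apply Commute.sum_left
    intro i _
    exact (((hcXY).pow_left (a i)).mul_left ((Commute.refl Y).pow_left (b i))).smul_left (c i)
  have hMpow : ∀ p q : ℕ, Commute M (X ^ p * Y ^ q) := fun p q =>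
    (hMX.pow_right p).mul_right (hMY.pow_right q)
  -- M v₁ = v₂
  have hMv : M.mulVec v₁ = v₂ := by
    rw [hM, ← hsum, my_sum_mulVec]
    exact Finset.sum_congr rfl fun i _ => by
      rw [Matrix.smul_mulVec, ← hab i]
  -- M is surjective hence a unit
  have hsurj : Function.Surjective M.mulVec := by
    have hrange : Submodule.span K
        {u : Fin n → K | ∃ p q : ℕ, u = (X ^ p * Y ^ q).mulVec v₂} ≤
        LinearMap.range M.mulVecLin := by
      rw [Submodule.span_le]
      rintro u ⟨p, q, rfl⟩
      refine ⟨(X ^ p * Y ^ q).mulVec v₁, ?_⟩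
      rw [Matrix.mulVecLin_apply, Matrix.mulVec_mulVec, (hMpow p q).eq,
        ← Matrix.mulVec_mulVec, hMv]
    have htop : LinearMap.range M.mulVecLin = ⊤ :=
      top_unique (by rw [← hv₂]; exact hrange)
    intro y
    obtain ⟨x, hx⟩ := LinearMap.range_eq_top.mp htop y
    exact ⟨x, by simpa [Matrix.mulVecLin_apply] using hx⟩
  have hunit : IsUnit M := Matrix.mulVec_surjective_iff_isUnit.mp hsurj
  refine ⟨hunit.unit, ?_, ?_, ?_, ?_⟩
  · have : (hunit.unit : Matrix (Fin n) (Fin n) K) * X = X * hunit.unit := hMX.eq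
    calc (hunit.unit : Matrix (Fin n) (Fin n) K) * X * ↑hunit.unit⁻¹
        = X * ↑hunit.unit * ↑hunit.unit⁻¹ := by rw [this]
      _ = X := by rw [mul_assoc, hunit.unit.mul_inv, mul_one]
  · have : (hunit.unit : Matrix (Fin n) (Fin n) K) * Y = Y * hunit.unit := hMY.eq
    calc (hunit.unit : Matrix (Fin n) (Fin n) K) * Y * ↑hunit.unit⁻¹
        = Y * ↑hunit.unit * ↑hunit.unit⁻¹ := by rw [this]
      _ = Y := by rw [mul_assoc, hunit.unit.mul_inv, mul_one]
  · exact hMv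
  · intro W hX hY u hu
    show M.mulVec u ∈ W
    have hXpow : ∀ (p : ℕ) (z : Fin n → K), z ∈ W → (X ^ p).mulVec z ∈ W := by
      intro p
      induction p with
      | zero => intro z hz; simpa using hz
      | succ p ih =>
        intro z hz
        rw [pow_succ', ← Matrix.mulVec_mulVec]
        exact hX _ (ih z hz)
    have hYpow : ∀ (q : ℕ) (z : Fin n → K), z ∈ W → (Y ^ q).mulVec z ∈ W := by
      intro q
      induction q with
      | zero => intro z hz; simpa using hz
      | succ q ih =>
        intro z hz
        rw [pow_succ', ← Matrix.mulVec_mulVec]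
        exact hY _ (ih z hz)
    rw [hM, my_sum_mulVec]
    refine Submodule.sum_mem W fun i _ => ?_
    rw [Matrix.smul_mulVec]
    refine Submodule.smul_mem W _ ?_
    rw [← Matrix.mulVec_mulVec]
    exact hXpow _ _ (hYpow _ _ hu)
end
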